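/- Let Γ be a K₄-free finite simple graph with vertex set V = {1, …, n}, let X be a maximal clique of Γ, and let H be the subgroup of P_Γ generated by {a_{ij} : i < j, {i,j} ⊆ X}. If {r,s} is an edge of Γ with {r,s} ⊄ X, then [[H, H], a_{rs}] = 1 in P_Γ, i.e., a_{rs} commutes with every element of the commutator subgroup [H, H]. -/

import Mathlib

abbrev PBIdx (n : ℕ) : Type := {p : Fin n × Fin n // p.1 < p.2}

namespace GraphicBraid

open scoped commutatorElement

def ofIdx {n : ℕ} {i j : Fin n} (h : i < j) : FreeGroup (PBIdx n) :=
  FreeGroup.of ⟨(i, j), h⟩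

/-- The Artin relators for the pure braid group `P_n`. -/
def pureBraidRels (n : ℕ) : Set (FreeGroup (PBIdx n)) :=
  {w | ∃ (i j r s : Fin n) (hij : i < j) (hrs : r < s),
      (s < i ∨ (i < r ∧ s < j)) ∧ w = ⁅ofIdx hij, ofIdx hrs⁆} ∪
  {w | ∃ (r i s j : Fin n) (hri : r < i) (his : i < s) (hsj : s < j),
      w = ⁅ofIdx (his.trans hsj), ofIdx hsj * ofIdx (hri.trans his) * (ofIdx hsj)⁻¹⁆} ∪
  {w | ∃ (i j r : Fin n) (hij : i < j) (hjr : j < r),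
      w = ⁅ofIdx hij * ofIdx (hij.trans hjr), ofIdx hjr⁆ ∨
      w = ⁅ofIdx hij, ofIdx (hij.trans hjr) * ofIdx hjr⁆}

/-- Relators killing the generators corresponding to non-edges of `Γ`. -/
def nonEdgeRels {n : ℕ} (Γ : SimpleGraph (Fin n)) : Set (FreeGroup (PBIdx n)) :=
  {w | ∃ p : PBIdx n, ¬ Γ.Adj p.1.1 p.1.2 ∧ w = FreeGroup.of p}

def graphicRels {n : ℕ} (Γ : SimpleGraph (Fin n)) : Set (FreeGroup (PBIdx n)) :=
  pureBraidRels n ∪ nonEdgeRels Γ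

/-- The graphic pure braid group `P_Γ`. -/
abbrev GPB {n : ℕ} (Γ : SimpleGraph (Fin n)) : Type := PresentedGroup (graphicRels Γ)

/-- The image of the Artin generator `a_{ij}` in `P_Γ`. -/
def agen {n : ℕ} (Γ : SimpleGraph (Fin n)) {i j : Fin n} (h : i < j) : GPB Γ :=
  PresentedGroup.of (rels := graphicRels Γ) ⟨(i, j), h⟩

/-- Relators killing the generators `a_{ij}` with `{i,j} ⊄ X`. -/
def killRels {n : ℕ} (X : Set (Fin n)) : Set (FreeGroup (PBIdx n)) :=
  {w | ∃ p : PBIdx n, ¬ (p.1.1 ∈ X ∧ p.1.2 ∈ X) ∧ w = FreeGroup.of p}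

/-- The quotient `P_X` of `P_Γ` obtained by killing all generators `a_{ij}` with `{i,j} ⊄ X`. -/
abbrev GPBX {n : ℕ} (Γ : SimpleGraph (Fin n)) (X : Set (Fin n)) : Type :=
  PresentedGroup (graphicRels Γ ∪ killRels X)

/-- The canonical surjection between presented groups when the set of relators grows. -/
def quotMap {α : Type*} {R S : Set (FreeGroup α)} (h : R ⊆ S) :
    PresentedGroup R →* PresentedGroup S :=
  QuotientGroup.map _ _ (MonoidHom.id _)
    (fun _ hx => Subgroup.normalClosure_mono h hx)

/-- The quotient map `ρ_X : P_Γ → P_X`. -/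
def rho {n : ℕ} (Γ : SimpleGraph (Fin n)) (X : Set (Fin n)) : GPB Γ →* GPBX Γ X :=
  quotMap Set.subset_union_left

lemma killRels_anti {n : ℕ} {X Y : Set (Fin n)} (h : X ⊆ Y) : killRels Y ⊆ killRels X := by
  rintro w ⟨p, hp, rfl⟩
  exact ⟨p, fun hx => hp ⟨h hx.1, h hx.2⟩, rfl⟩

/-- The quotient map `P_Y → P_X` for `X ⊆ Y`. -/
def rhoDown {n : ℕ} (Γ : SimpleGraph (Fin n)) {X Y : Set (Fin n)} (h : X ⊆ Y) :
    GPBX Γ Y →* GPBX Γ X :=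
  quotMap (Set.union_subset_union_right _ (killRels_anti h))

/-- `X` is a maximal clique of `Γ`. -/
def MaxClique {n : ℕ} (Γ : SimpleGraph (Fin n)) (X : Set (Fin n)) : Prop :=
  Γ.IsClique X ∧ ∀ Y : Set (Fin n), Γ.IsClique Y → X ⊆ Y → Y = X


/-- The subgroup of `P_Γ` generated by the generators `a_{ij}` with `{i,j} ⊆ X`. -/
def cliqueSubgroup {n : ℕ} (Γ : SimpleGraph (Fin n)) (X : Set (Fin n)) : Subgroup (GPB Γ) :=
  Subgroup.closure {g : GPB Γ | ∃ p : PBIdx n, (p.1.1 ∈ X ∧ p.1.2 ∈ X) ∧ g = PresentedGroup.of p}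

/-- The bipartite incidence graph of edges and 3-cliques (triangles) of `Γ`. -/
def incidenceGraph {n : ℕ} (Γ : SimpleGraph (Fin n)) :
    SimpleGraph (Γ.edgeSet ⊕ {T : Finset (Fin n) // Γ.IsNClique 3 T}) where
  Adj x y :=
    match x, y with
    | Sum.inl e, Sum.inr T => ∀ v : Fin n, v ∈ (e : Sym2 (Fin n)) → v ∈ T.1
    | Sum.inr T, Sum.inl e => ∀ v : Fin n, v ∈ (e : Sym2 (Fin n)) → v ∈ T.1
    | _, _ => False
  symm := ⟨by rintro (e | T) (f | S) h <;> exact h⟩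
  loopless := ⟨by rintro (e | T) h <;> exact h⟩


section Helpers

section Abstract
variable {G : Type*} [Group G]

lemma commute_of_conj {g x h : G} (h1 : Commute g (x * h * x⁻¹)) (h2 : Commute g x) :
    Commute g h := by
  have h3 := (h2.inv_right.mul_right h1).mul_right h2
  rwa [show x⁻¹ * (x * h * x⁻¹) * x = h from by group] at h3

lemma central_conj {z x : G} (h : Commute z x) : z * x * z⁻¹ = x := by
  rw [h.eq]; group

lemma central_conj' {z x : G} (h : Commute z x) : z⁻¹ * x * z = x := by
  rw [h.inv_left.eq]; group

lemma Za' {a b c : G} (h2 : Commute a (b * c)) : Commute (a * b * c) a := by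
  have h3 := Commute.mul_left (Commute.refl a) h2.symm
  rwa [← mul_assoc] at h3

lemma Zc' {a b c : G} (h1 : Commute (a * b) c) : Commute (a * b * c) c :=
  h1.mul_left (Commute.refl c)

lemma Zb' {a b c : G} (h1 : Commute (a * b) c) (h2 : Commute a (b * c)) :
    Commute (a * b * c) b := by
  have h3 := ((Za' h2).inv_right.mul_right (Commute.refl (a*b*c))).mul_right
    (Zc' h1).inv_right
  rwa [show a⁻¹ * (a*b*c) * c⁻¹ = b from by group] at h3

section Tri
variable {a b c : G} (h1 : Commute (a * b) c) (h2 : Commute a (b * c))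

include h2 in
lemma tri1 : c * a * c⁻¹ = b⁻¹ * a * b := by
  calc c * a * c⁻¹ = b⁻¹ * (b * c * a) * c⁻¹ := by group
    _ = b⁻¹ * (a * (b * c)) * c⁻¹ := by rw [← h2.eq]
    _ = b⁻¹ * a * b := by group

include h1 h2 in
lemma tri2 : c * b * c⁻¹ = (a*b)⁻¹ * b * (a*b) := by
  calc c * b * c⁻¹ = (a*b)⁻¹ * (a * b * c * b) * c⁻¹ := by group
    _ = (a*b)⁻¹ * (b * (a * b * c)) * c⁻¹ := by rw [(Zb' h1 h2).eq]
    _ = (a*b)⁻¹ * b * (a*b) := by group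

include h1 h2 in
lemma tri3 : c⁻¹ * a * c = (a*b) * a * (a*b)⁻¹ := by
  have k : a * (c * (a*b)) = (c * (a*b)) * a := by
    rw [← h1.eq]; exact (Za' h2).symm.eq
  calc c⁻¹ * a * c = c⁻¹ * (a * (c * (a*b))) * (a*b)⁻¹ := by group
    _ = c⁻¹ * ((c * (a*b)) * a) * (a*b)⁻¹ := by rw [k]
    _ = (a*b) * a * (a*b)⁻¹ := by group

include h1 h2 in
lemma tri4 : c⁻¹ * b * c = (a*b) * b * (a*b)⁻¹ := by
  have k : b * (c * (a*b)) = (c * (a*b)) * b := by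
    rw [← h1.eq]; exact (Zb' h1 h2).symm.eq
  calc c⁻¹ * b * c = c⁻¹ * (b * (c * (a*b))) * (a*b)⁻¹ := by group
    _ = c⁻¹ * ((c * (a*b)) * b) * (a*b)⁻¹ := by rw [k]
    _ = (a*b) * b * (a*b)⁻¹ := by group

include h1 h2 in
lemma tri5 : a * b * a⁻¹ = (b*c)⁻¹ * b * (b*c) := by
  have k : Commute (a*b*c) ((b*c)⁻¹ * b * (b*c)) :=
    (((Zb' h1 h2).mul_right (Zc' h1)).inv_right.mul_right (Zb' h1 h2)).mul_right
      ((Zb' h1 h2).mul_right (Zc' h1))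
  calc a * b * a⁻¹ = (a*b*c) * ((b*c)⁻¹ * b * (b*c)) * (a*b*c)⁻¹ := by group
    _ = (b*c)⁻¹ * b * (b*c) := central_conj k

include h1 h2 in
lemma tri6 : a * c * a⁻¹ = (b*c)⁻¹ * c * (b*c) := by
  have k : Commute (a*b*c) ((b*c)⁻¹ * c * (b*c)) :=
    (((Zb' h1 h2).mul_right (Zc' h1)).inv_right.mul_right (Zc' h1)).mul_right
      ((Zb' h1 h2).mul_right (Zc' h1))
  calc a * c * a⁻¹ = (a*b*c) * ((b*c)⁻¹ * c * (b*c)) * (a*b*c)⁻¹ := by group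
    _ = (b*c)⁻¹ * c * (b*c) := central_conj k

include h1 h2 in
lemma tri7 : a⁻¹ * b * a = (b*c) * b * (b*c)⁻¹ := by
  calc a⁻¹ * b * a = (b*c) * ((a*b*c)⁻¹ * b * (a*b*c)) * (b*c)⁻¹ := by group
    _ = (b*c) * b * (b*c)⁻¹ := by rw [central_conj' (Zb' h1 h2)]

include h1 h2 in
lemma tri8 : a⁻¹ * c * a = (b*c) * c * (b*c)⁻¹ := by
  calc a⁻¹ * c * a = (b*c) * ((a*b*c)⁻¹ * c * (a*b*c)) * (b*c)⁻¹ := by group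
    _ = (b*c) * c * (b*c)⁻¹ := by rw [central_conj' (Zc' h1)]

include h1 h2 in
lemma tri9 : b * a * b⁻¹ = a⁻¹ * (c⁻¹ * a * c) * a := by
  have k : Commute (a*b*c) (c⁻¹ * a * c) :=
    ((Zc' h1).inv_right.mul_right (Za' h2)).mul_right (Zc' h1)
  calc b * a * b⁻¹ = a⁻¹ * ((a*b*c) * (c⁻¹ * a * c) * (a*b*c)⁻¹) * a := by group
    _ = a⁻¹ * (c⁻¹ * a * c) * a := by rw [central_conj k]

include h1 h2 in
lemma tri10 : b * c * b⁻¹ = a⁻¹ * c * a := by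
  calc b * c * b⁻¹ = a⁻¹ * ((a*b*c) * c * (a*b*c)⁻¹) * a := by group
    _ = a⁻¹ * c * a := by rw [central_conj (Zc' h1)]

include h1 h2 in
lemma tri11 : b⁻¹ * a * b = c * a * c⁻¹ := by
  calc b⁻¹ * a * b = c * ((a*b*c)⁻¹ * a * (a*b*c)) * c⁻¹ := by group
    _ = c * a * c⁻¹ := by rw [central_conj' (Za' h2)]

include h1 h2 in
lemma tri12 : b⁻¹ * c * b = c * (a * c * a⁻¹) * c⁻¹ := by
  have k : Commute (a*b*c) (a * c * a⁻¹) :=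
    ((Za' h2).mul_right (Zc' h1)).mul_right (Za' h2).inv_right
  calc b⁻¹ * c * b = c * ((a*b*c)⁻¹ * (a * c * a⁻¹) * (a*b*c)) * c⁻¹ := by group
    _ = c * (a * c * a⁻¹) * c⁻¹ := by rw [central_conj' k]

end Tri

section Kill
variable {a b c : G}

lemma killA (h1 : Commute (a * b) c) (ha : a = 1) : Commute b c := by
  rw [ha, one_mul] at h1; exact h1

lemma killB (h2 : Commute a (b * c)) (hb : b = 1) : Commute a c := by
  rw [hb, one_mul] at h2; exact h2

lemma killC (h2 : Commute a (b * c)) (hc : c = 1) : Commute a b := by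
  rw [hc, mul_one] at h2; exact h2

end Kill
end Abstract

open Subgroup in
lemma AL {G : Type*} [Group G] (Ugen S : Set G) (t a : G)
    (haU : a ∈ Subgroup.closure Ugen)
    (hstab : ∀ u ∈ Ugen, t * u * t⁻¹ ∈ Subgroup.closure Ugen)
    (hstab' : ∀ u ∈ Ugen, t⁻¹ * u * t ∈ Subgroup.closure Ugen)
    (hgen : ∀ g ∈ S, g = t ∨ ∀ u ∈ Ugen, Commute g u) :
    ∀ x ∈ Subgroup.closure S, ∀ y ∈ Subgroup.closure S, Commute a ⁅x, y⁆ := by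
  set U := Subgroup.closure Ugen with hUdef
  have hU1 : ∀ u ∈ U, t * u * t⁻¹ ∈ U := by
    intro u hu
    induction hu using Subgroup.closure_induction with
    | mem g hg => exact hstab g hg
    | one => simpa using one_mem U
    | mul x y _ _ hx hy =>
        have h3 := mul_mem hx hy
        rwa [show t*x*t⁻¹*(t*y*t⁻¹) = t*(x*y)*t⁻¹ from by group] at h3
    | inv x _ hx =>
        have h3 := inv_mem hx
        rwa [show (t*x*t⁻¹)⁻¹ = t*x⁻¹*t⁻¹ from by group] at h3
  have hU2 : ∀ u ∈ U, t⁻¹ * u * t ∈ U := by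
    intro u hu
    induction hu using Subgroup.closure_induction with
    | mem g hg => exact hstab' g hg
    | one => simpa using one_mem U
    | mul x y _ _ hx hy =>
        have h3 := mul_mem hx hy
        rwa [show t⁻¹*x*t*(t⁻¹*y*t) = t⁻¹*(x*y)*t from by group] at h3
    | inv x _ hx =>
        have h3 := inv_mem hx
        rwa [show (t⁻¹*x*t)⁻¹ = t⁻¹*x⁻¹*t from by group] at h3
  have hzU : ∀ (k : ℤ), ∀ u ∈ U, t ^ k * u * t ^ (-k) ∈ U := by
    intro k
    induction k using Int.induction_on with
    | zero => intro u hu; simpa using hu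
    | succ i hi =>
        intro u hu
        have h3 := hU1 _ (hi u hu)
        rwa [show t * (t ^ (i:ℤ) * u * t ^ (-(i:ℤ))) * t⁻¹
            = t ^ ((i:ℤ)+1) * u * t ^ (-((i:ℤ)+1)) from by group] at h3
    | pred i hi =>
        intro u hu
        have h3 := hU2 _ (hi u hu)
        rwa [show t⁻¹ * (t ^ (-(i:ℤ)) * u * t ^ (- -(i:ℤ))) * t
            = t ^ (-(i:ℤ)-1) * u * t ^ (-(-(i:ℤ)-1)) from by group] at h3
  have key : ∀ x ∈ Subgroup.closure S, ∃ k : ℤ, ∀ u ∈ U, x * u * x⁻¹ = t ^ k * u * t ^ (-k) := by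
    intro x hx
    induction hx using Subgroup.closure_induction with
    | mem g hg =>
        rcases hgen g hg with h | h
        · exact ⟨1, fun u _ => by rw [h]; group⟩
        · refine ⟨0, fun u hu => ?_⟩
          have hc : Commute g u := by
            induction hu using Subgroup.closure_induction with
            | mem v hv => exact h v hv
            | one => exact Commute.one_right g
            | mul p q _ _ hp hq => exact hp.mul_right hq
            | inv p _ hp => exact hp.inv_right
          rw [hc.eq]; group
    | one => exact ⟨0, fun u _ => by group⟩
    | mul x y _ _ hx hy =>
        obtain ⟨kx, hkx⟩ := hx
        obtain ⟨ky, hky⟩ := hy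
        refine ⟨kx + ky, fun u hu => ?_⟩
        have e1 : y * u * y⁻¹ = t ^ ky * u * t ^ (-ky) := hky u hu
        have e2 := hkx _ (hzU ky u hu)
        calc x * y * u * (x * y)⁻¹ = x * (y * u * y⁻¹) * x⁻¹ := by group
          _ = x * (t ^ ky * u * t ^ (-ky)) * x⁻¹ := by rw [e1]
          _ = t ^ kx * (t ^ ky * u * t ^ (-ky)) * t ^ (-kx) := e2
          _ = t ^ (kx + ky) * u * t ^ (-(kx + ky)) := by group
    | inv x _ hx =>
        obtain ⟨k, hk⟩ := hx
        refine ⟨-k, fun u hu => ?_⟩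
        have e2 := hk _ (hzU (-k) u hu)
        have e3 : x * (t ^ (-k) * u * t ^ (-(-k))) * x⁻¹ = u := by
          rw [e2]; group
        have e4 : x⁻¹ * u * x = t ^ (-k) * u * t ^ (-(-k)) := by
          conv_lhs => rw [← e3]
          group
        rw [inv_inv]; exact e4
  intro x hx y hy
  obtain ⟨p, hp⟩ := key x hx
  obtain ⟨q, hq⟩ := key y hy
  have hu1 : t ^ (-q) * a * t ^ (-(-q)) ∈ U := hzU (-q) a haU
  have hu2 : t ^ (-p) * (t ^ (-q) * a * t ^ (-(-q))) * t ^ (-(-p)) ∈ U := hzU (-p) _ hu1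
  -- e1 : y⁻¹ * a * y = t^(-q) * a * t^q
  have e1 : y⁻¹ * a * y = t ^ (-q) * a * t ^ (-(-q)) := by
    have h3 := hq _ hu1
    have h4 : y * (t ^ (-q) * a * t ^ (-(-q))) * y⁻¹ = a := by rw [h3]; group
    conv_lhs => rw [← h4]
    group
  have e2 : x⁻¹ * (t ^ (-q) * a * t ^ (-(-q))) * x
      = t ^ (-p) * (t ^ (-q) * a * t ^ (-(-q))) * t ^ (-(-p)) := by
    have h3 := hp _ hu2
    have h4 : x * (t ^ (-p) * (t ^ (-q) * a * t ^ (-(-q))) * t ^ (-(-p))) * x⁻¹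
        = t ^ (-q) * a * t ^ (-(-q)) := by rw [h3]; group
    conv_lhs => rw [← h4]
    group
  have e3 := hq _ hu2
  have e4 := hp _ (hzU q _ hu2)
  have hfinal : ⁅x, y⁆ * a * ⁅x, y⁆⁻¹ = a := by
    calc ⁅x, y⁆ * a * ⁅x, y⁆⁻¹
        = x * (y * (x⁻¹ * (y⁻¹ * a * y) * x) * y⁻¹) * x⁻¹ := by
          rw [commutatorElement_def]; group
      _ = x * (y * (t ^ (-p) * (t ^ (-q) * a * t ^ (-(-q))) * t ^ (-(-p))) * y⁻¹) * x⁻¹ := by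
          rw [e1, e2]
      _ = x * (t ^ q * (t ^ (-p) * (t ^ (-q) * a * t ^ (-(-q))) * t ^ (-(-p))) * t ^ (-q)) * x⁻¹ := by
          rw [e3]
      _ = t ^ p * (t ^ q * (t ^ (-p) * (t ^ (-q) * a * t ^ (-(-q))) * t ^ (-(-p))) * t ^ (-q)) * t ^ (-p) := e4
      _ = a := by group
  have : a * ⁅x, y⁆ = ⁅x, y⁆ * a := by
    calc a * ⁅x, y⁆ = (⁅x, y⁆ * a * ⁅x, y⁆⁻¹) * ⁅x, y⁆ := by rw [hfinal]
      _ = ⁅x, y⁆ * a := by group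
  exact this

end Helpers

section Rel

variable {n : ℕ} (Γ : SimpleGraph (Fin n))

lemma mk_rel_one {w : FreeGroup (PBIdx n)} (hw : w ∈ graphicRels Γ) :
    PresentedGroup.mk (graphicRels Γ) w = 1 :=
  (QuotientGroup.eq_one_iff _).mpr (Subgroup.subset_normalClosure hw)

lemma comm_rel1 {i j r s : Fin n} (hij : i < j) (hrs : r < s)
    (hcond : s < i ∨ (i < r ∧ s < j)) : Commute (agen Γ hij) (agen Γ hrs) := by
  have hw : (⁅ofIdx hij, ofIdx hrs⁆ : FreeGroup (PBIdx n)) ∈ graphicRels Γ :=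
    Or.inl (Or.inl (Or.inl ⟨i, j, r, s, hij, hrs, hcond, rfl⟩))
  have h1 := mk_rel_one Γ hw
  rw [map_commutatorElement] at h1
  exact commutatorElement_eq_one_iff_commute.mp h1

lemma comm_rel2 {r i s j : Fin n} (hri : r < i) (his : i < s) (hsj : s < j) :
    Commute (agen Γ (his.trans hsj))
      (agen Γ hsj * agen Γ (hri.trans his) * (agen Γ hsj)⁻¹) := by
  have hw : (⁅ofIdx (his.trans hsj), ofIdx hsj * ofIdx (hri.trans his) * (ofIdx hsj)⁻¹⁆ :
      FreeGroup (PBIdx n)) ∈ graphicRels Γ :=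
    Or.inl (Or.inl (Or.inr ⟨r, i, s, j, hri, his, hsj, rfl⟩))
  have h1 := mk_rel_one Γ hw
  rw [map_commutatorElement] at h1
  have h2 := commutatorElement_eq_one_iff_commute.mp h1
  simp only [map_mul, map_inv] at h2; exact h2

lemma comm_rel3a {i j r : Fin n} (hij : i < j) (hjr : j < r) :
    Commute (agen Γ hij * agen Γ (hij.trans hjr)) (agen Γ hjr) := by
  have hw : (⁅ofIdx hij * ofIdx (hij.trans hjr), ofIdx hjr⁆ :
      FreeGroup (PBIdx n)) ∈ graphicRels Γ :=
    Or.inl (Or.inr ⟨i, j, r, hij, hjr, Or.inl rfl⟩)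
  have h1 := mk_rel_one Γ hw
  rw [map_commutatorElement] at h1
  have h2 := commutatorElement_eq_one_iff_commute.mp h1
  simp only [map_mul, map_inv] at h2; exact h2

lemma comm_rel3b {i j r : Fin n} (hij : i < j) (hjr : j < r) :
    Commute (agen Γ hij) (agen Γ (hij.trans hjr) * agen Γ hjr) := by
  have hw : (⁅ofIdx hij, ofIdx (hij.trans hjr) * ofIdx hjr⁆ :
      FreeGroup (PBIdx n)) ∈ graphicRels Γ :=
    Or.inl (Or.inr ⟨i, j, r, hij, hjr, Or.inr rfl⟩)
  have h1 := mk_rel_one Γ hw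
  rw [map_commutatorElement] at h1
  have h2 := commutatorElement_eq_one_iff_commute.mp h1
  simp only [map_mul, map_inv] at h2; exact h2

lemma agen_eq_one {i j : Fin n} (hij : i < j) (h : ¬ Γ.Adj i j) : agen Γ hij = 1 := by
  have hw : (FreeGroup.of (⟨(i,j), hij⟩ : PBIdx n)) ∈ graphicRels Γ :=
    Or.inr ⟨⟨(i,j), hij⟩, h, rfl⟩
  exact mk_rel_one Γ hw

/-- `xgen Γ m w` is the generator attached to the unordered pair `{m, w}`. -/
def xgen (m w : Fin n) : GPB Γ :=
  if h : m < w then agen Γ h else if h2 : w < m then agen Γ h2 else 1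

lemma xgen_of_lt {m w : Fin n} (h : m < w) : xgen Γ m w = agen Γ h := dif_pos h

lemma xgen_of_gt {m w : Fin n} (h : w < m) : xgen Γ m w = agen Γ h := by
  rw [xgen, dif_neg (asymm h), dif_pos h]

lemma xgen_kill {m w : Fin n} (h : ¬ Γ.Adj m w) : xgen Γ m w = 1 := by
  rcases lt_trichotomy m w with hlt | heq | hgt
  · rw [xgen_of_lt Γ hlt]; exact agen_eq_one Γ hlt h
  · rw [xgen, dif_neg (fun hc => absurd heq (ne_of_lt hc)),
      dif_neg (fun hc => absurd heq.symm (ne_of_lt hc))]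
  · rw [xgen_of_gt Γ hgt]
    exact agen_eq_one Γ hgt (fun hadj => h (Γ.adj_symm hadj))

lemma commShare {u1 u2 w : Fin n} (h12 : u1 < u2) (hw1 : w ≠ u1) (hw2 : w ≠ u2)
    (hkill : ¬ Γ.Adj u1 w ∨ ¬ Γ.Adj u2 w) :
    Commute (agen Γ h12) (xgen Γ u1 w) ∧ Commute (agen Γ h12) (xgen Γ u2 w) := by
  rcases lt_trichotomy w u1 with hA | hE | hB
  · -- w < u1 < u2 : triangle (w, u1, u2); a = xgen u1 w, b = xgen u2 w, c = agen h12
    rw [xgen_of_gt Γ hA, xgen_of_gt Γ (hA.trans h12)]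
    have h1 := comm_rel3a Γ hA h12
    have h2 := comm_rel3b Γ hA h12
    rcases hkill with hk | hk
    · have ha : agen Γ hA = 1 := agen_eq_one Γ hA (fun hadj => hk (Γ.adj_symm hadj))
      exact ⟨by rw [ha]; exact Commute.one_right _, (killA h1 ha).symm⟩
    · have hb : agen Γ (hA.trans h12) = 1 :=
        agen_eq_one Γ (hA.trans h12) (fun hadj => hk (Γ.adj_symm hadj))
      exact ⟨(killB h2 hb).symm, by rw [hb]; exact Commute.one_right _⟩
  · exact absurd hE hw1
  · rcases lt_trichotomy w u2 with hC | hE | hD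
    · -- u1 < w < u2 : triangle (u1, w, u2); a = xgen u1 w, b = agen h12, c = xgen u2 w
      rw [xgen_of_lt Γ hB, xgen_of_gt Γ hC]
      have h1 := comm_rel3a Γ hB hC
      have h2 := comm_rel3b Γ hB hC
      rcases hkill with hk | hk
      · have ha : agen Γ hB = 1 := agen_eq_one Γ hB hk
        exact ⟨by rw [ha]; exact Commute.one_right _, killA h1 ha⟩
      · have hc : agen Γ hC = 1 := agen_eq_one Γ hC (fun hadj => hk (Γ.adj_symm hadj))
        exact ⟨(killC h2 hc).symm, by rw [hc]; exact Commute.one_right _⟩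
    · exact absurd hE hw2
    · -- u1 < u2 < w : triangle (u1, u2, w); a = agen h12, b = xgen u1 w, c = xgen u2 w
      rw [xgen_of_lt Γ (h12.trans hD), xgen_of_lt Γ hD]
      have h2 := comm_rel3b Γ h12 hD
      rcases hkill with hk | hk
      · have hb : agen Γ (h12.trans hD) = 1 := agen_eq_one Γ (h12.trans hD) hk
        exact ⟨by rw [hb]; exact Commute.one_right _, killB h2 hb⟩
      · have hc : agen Γ hD = 1 := agen_eq_one Γ hD hk
        exact ⟨killC h2 hc, by rw [hc]; exact Commute.one_right _⟩

end Rel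
lemma commute_conj_down {G : Type*} [Group G] {x y b : G} (h : Commute x (b * y * b⁻¹)) :
    Commute (b⁻¹ * x * b) y := by
  have e := h.eq
  calc (b⁻¹ * x * b) * y = b⁻¹ * (x * (b * y * b⁻¹)) * b := by group
    _ = b⁻¹ * ((b * y * b⁻¹) * x) * b := by rw [e]
    _ = y * (b⁻¹ * x * b) := by group

section CommAux
variable {n : ℕ} (Γ : SimpleGraph (Fin n))

lemma commAux {u1 u2 m w : Fin n} (h12 : u1 < u2) (hm1 : m ≠ u1) (hm2 : m ≠ u2)
    (hmw : m ≠ w) (hw1 : w ≠ u1) (hw2 : w ≠ u2)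
    (hkill : ¬ Γ.Adj u1 w ∨ ¬ Γ.Adj u2 w) :
    Commute (agen Γ h12) (xgen Γ m w) := by
  -- the x-generators of the pair (u1,w), (u2,w) that get killed
  rcases lt_trichotomy m w with hmw' | hE | hmw'
  · -- m < w
    rw [xgen_of_lt Γ hmw']
    rcases lt_trichotomy w u1 with hA | hE | hB
    · -- m < w < u1 < u2 : unlinked
      exact comm_rel1 Γ h12 hmw' (Or.inl hA)
    · exact absurd hE hw1
    · rcases lt_trichotomy m u1 with hC | hE | hD
      · -- m < u1 < w
        rcases lt_trichotomy w u2 with hF | hE | hG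
        · -- pattern (i) : m < u1 < w < u2, crossing
          have R := comm_rel2 Γ hC hB hF
          -- R : Commute (agen h12) (agen hF * agen hmw' * (agen hF)⁻¹)
          rcases hkill with hk | hk
          · -- x_{u1} = agen (u1 w) killed; need Commute g (agen hF) first
            have hX1 : agen Γ hB = 1 := agen_eq_one Γ hB hk
            have h1t := comm_rel3a Γ hB hF
            have hgX2 : Commute (agen Γ h12) (agen Γ hF) := killA h1t hX1
            exact commute_of_conj R hgX2
          · have hX2 : agen Γ hF = 1 := agen_eq_one Γ hF (fun h => hk (Γ.adj_symm h))
            rw [hX2] at R; simpa using R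
        · exact absurd hE hw2
        · -- m < u1 < u2 < w : nested? no: pair (m,w) contains (u1,u2) : unlinked
          exact (comm_rel1 Γ hmw' h12 (Or.inr ⟨hC, hG⟩)).symm
      · exact absurd hE hm1
      · -- u1 < m < w
        rcases lt_trichotomy m u2 with hF | hE | hG
        · rcases lt_trichotomy w u2 with hH | hE | hI
          · -- u1 < m < w < u2 : nested inside : unlinked
            exact comm_rel1 Γ h12 hmw' (Or.inr ⟨hD, hH⟩)
          · exact absurd hE hw2
          · -- pattern (iii) : u1 < m < u2 < w, crossing
            have R := comm_rel2 Γ hD hF hI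
            -- R : Commute (agen hmw') (agen hI * agen h12 * (agen hI)⁻¹)
            rcases hkill with hk | hk
            · have hX1 : agen Γ (h12.trans hI) = 1 :=
                agen_eq_one Γ (h12.trans hI) hk
              have h2t := comm_rel3b Γ h12 hI
              have hgX2 : Commute (agen Γ h12) (agen Γ hI) := killB h2t hX1
              have e : agen Γ hI * agen Γ h12 * (agen Γ hI)⁻¹ = agen Γ h12 :=
                central_conj hgX2.symm
              rw [e] at R
              exact R.symm
            · have hX2 : agen Γ hI = 1 := agen_eq_one Γ hI hk
              rw [hX2] at R
              have : Commute (agen Γ hmw') (agen Γ h12) := by simpa using R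
              exact this.symm
        · exact absurd hE hm2
        · -- u2 < m < w : both to the right : unlinked
          exact (comm_rel1 Γ hmw' h12 (Or.inl hG)).symm
  · exact absurd hE hmw
  · -- w < m
    rw [xgen_of_gt Γ hmw']
    rcases lt_trichotomy m u1 with hA | hE | hB
    · -- w < m < u1 < u2 : unlinked
      exact comm_rel1 Γ h12 hmw' (Or.inl hA)
    · exact absurd hE hm1
    · rcases lt_trichotomy w u1 with hC | hE | hD
      · -- w < u1 , u1 < m
        rcases lt_trichotomy m u2 with hF | hE | hG
        · -- pattern (ii) : w < u1 < m < u2, crossing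
          have R := comm_rel2 Γ hC hB hF
          -- R : Commute (agen h12) (agen hF * agen hmw' * (agen hF)⁻¹)
          -- triangle (w, m, u2) : a = agen hmw', b = agen (w u2), c = agen hF
          have h2t := comm_rel3b Γ hmw' hF
          have e : agen Γ hF * agen Γ hmw' * (agen Γ hF)⁻¹
              = (agen Γ (hmw'.trans hF))⁻¹ * agen Γ hmw' * agen Γ (hmw'.trans hF) :=
            tri1 h2t
          rw [e] at R
          rcases hkill with hk | hk
          · have hX1 : agen Γ hC = 1 := agen_eq_one Γ hC (fun h => hk (Γ.adj_symm h))
            have h1t' := comm_rel3a Γ hC h12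
            have hgX2 : Commute (agen Γ (hC.trans h12)) (agen Γ h12) := killA h1t' hX1
            -- now R : Commute g (X2⁻¹ * x_m * X2) with X2 = agen (w u2) = agen (hmw'.trans hF)
            have R' : Commute (agen Γ h12)
                ((agen Γ (hmw'.trans hF))⁻¹ * agen Γ hmw' * ((agen Γ (hmw'.trans hF))⁻¹)⁻¹) := by
              rwa [inv_inv]
            exact commute_of_conj R' hgX2.symm.inv_right
          · have hX2 : agen Γ (hmw'.trans hF) = 1 := agen_eq_one Γ (hmw'.trans hF)
              (fun h => hk (Γ.adj_symm h))
            rw [hX2] at R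
            simpa using R
        · exact absurd hE hm2
        · -- w < u1 < u2 < m : pair (w,m) contains (u1,u2) : unlinked
          exact (comm_rel1 Γ hmw' h12 (Or.inr ⟨hC, hG⟩)).symm
      · exact absurd hE hw1
      · -- u1 < w
        rcases lt_trichotomy w u2 with hF | hE | hG
        · rcases lt_trichotomy m u2 with hH | hE | hI
          ·
            -- pair (w,m) inside (u1,u2) : nested : unlinked
            exact comm_rel1 Γ h12 hmw' (Or.inr ⟨hD, hH⟩)
          · exact absurd hE hm2
          · -- pattern (iv) : u1 < w < u2 < m, crossing
            have R := comm_rel2 Γ hD hF hI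
            -- R : Commute (agen hmw') (agen hI * agen h12 * (agen hI)⁻¹)
            have R2 : Commute ((agen Γ hI)⁻¹ * agen Γ hmw' * agen Γ hI) (agen Γ h12) :=
              commute_conj_down R
            -- triangle (w, u2, m) : a = agen hF (X2), b = agen hmw' (x_m), c = agen hI (B)
            have h1t := comm_rel3a Γ hF hI
            have h2t := comm_rel3b Γ hF hI
            have e : (agen Γ hI)⁻¹ * agen Γ hmw' * agen Γ hI
                = agen Γ hF * agen Γ hmw' * (agen Γ hF)⁻¹ := by
              have e0 := tri4 h1t h2t
              -- e0 : (agen hI)⁻¹ * agen hmw' * agen hI = (agen hF * agen hmw') * agen hmw' * (agen hF * agen hmw')⁻¹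
              rw [e0]; group
            rw [e] at R2
            rcases hkill with hk | hk
            · have hX1 : agen Γ hD = 1 := agen_eq_one Γ hD hk
              have h1t' := comm_rel3a Γ hD hF
              have hgX2 : Commute (agen Γ h12) (agen Γ hF) := killA h1t' hX1
              exact commute_of_conj R2.symm hgX2
            · have hX2 : agen Γ hF = 1 := agen_eq_one Γ hF (fun h => hk (Γ.adj_symm h))
              rw [hX2] at R2
              have : Commute (agen Γ hmw') (agen Γ h12) := by simpa using R2
              exact this.symm
        · exact absurd hE hw2
        · -- u1 < u2 < w < m : both right : unlinked
          exact (comm_rel1 Γ hmw' h12 (Or.inl hG)).symm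

end CommAux

section Stab
open Subgroup
variable {n : ℕ} (Γ : SimpleGraph (Fin n))

lemma triStab {α β w : Fin n} (hab : α < β) (hw1 : w ≠ α) (hw2 : w ≠ β)
    {Ugen : Set (GPB Γ)} (hXa : xgen Γ α w ∈ Ugen) (hXb : xgen Γ β w ∈ Ugen) :
    (agen Γ hab * xgen Γ α w * (agen Γ hab)⁻¹ ∈ Subgroup.closure Ugen) ∧
    (agen Γ hab * xgen Γ β w * (agen Γ hab)⁻¹ ∈ Subgroup.closure Ugen) ∧
    ((agen Γ hab)⁻¹ * xgen Γ α w * agen Γ hab ∈ Subgroup.closure Ugen) ∧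
    ((agen Γ hab)⁻¹ * xgen Γ β w * agen Γ hab ∈ Subgroup.closure Ugen) := by
  have ha' : xgen Γ α w ∈ Subgroup.closure Ugen := subset_closure hXa
  have hb' : xgen Γ β w ∈ Subgroup.closure Ugen := subset_closure hXb
  rcases lt_trichotomy w α with hA | hE | hB
  · -- w < α < β : triangle (w, α, β) : (a,b,c) = (Xα, Xβ, t)
    rw [xgen_of_gt Γ hA, xgen_of_gt Γ (hA.trans hab)] at *
    have h1 := comm_rel3a Γ hA hab
    have h2 := comm_rel3b Γ hA hab
    refine ⟨?_, ?_, ?_, ?_⟩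
    · rw [tri1 h2]
      exact mul_mem (mul_mem (inv_mem hb') ha') hb'
    · rw [tri2 h1 h2]
      exact mul_mem (mul_mem (inv_mem (mul_mem ha' hb')) hb') (mul_mem ha' hb')
    · rw [tri3 h1 h2]
      exact mul_mem (mul_mem (mul_mem ha' hb') ha') (inv_mem (mul_mem ha' hb'))
    · rw [tri4 h1 h2]
      exact mul_mem (mul_mem (mul_mem ha' hb') hb') (inv_mem (mul_mem ha' hb'))
  · exact absurd hE hw1
  · rcases lt_trichotomy w β with hC | hE | hD
    · -- α < w < β : triangle (α, w, β) : (a,b,c) = (Xα, t, Xβ)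
      rw [xgen_of_lt Γ hB, xgen_of_gt Γ hC] at *
      have h1 := comm_rel3a Γ hB hC
      have h2 := comm_rel3b Γ hB hC
      refine ⟨?_, ?_, ?_, ?_⟩
      · rw [tri9 h1 h2]
        exact mul_mem (mul_mem (inv_mem ha')
          (mul_mem (mul_mem (inv_mem hb') ha') hb')) ha'
      · rw [tri10 h1 h2]
        exact mul_mem (mul_mem (inv_mem ha') hb') ha'
      · rw [tri11 h1 h2]
        exact mul_mem (mul_mem hb' ha') (inv_mem hb')
      · rw [tri12 h1 h2]
        exact mul_mem (mul_mem hb' (mul_mem (mul_mem ha' hb') (inv_mem ha'))) (inv_mem hb')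
    · exact absurd hE hw2
    · -- α < β < w : triangle (α, β, w) : (a,b,c) = (t, Xα, Xβ)
      rw [xgen_of_lt Γ (hab.trans hD), xgen_of_lt Γ hD] at *
      have h1 := comm_rel3a Γ hab hD
      have h2 := comm_rel3b Γ hab hD
      refine ⟨?_, ?_, ?_, ?_⟩
      · rw [tri5 h1 h2]
        exact mul_mem (mul_mem (inv_mem (mul_mem ha' hb')) ha') (mul_mem ha' hb')
      · rw [tri6 h1 h2]
        exact mul_mem (mul_mem (inv_mem (mul_mem ha' hb')) hb') (mul_mem ha' hb')
      · rw [tri7 h1 h2]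
        exact mul_mem (mul_mem (mul_mem ha' hb') ha') (inv_mem (mul_mem ha' hb'))
      · rw [tri8 h1 h2]
        exact mul_mem (mul_mem (mul_mem ha' hb') hb') (inv_mem (mul_mem ha' hb'))

lemma crossStab {α β m w : Fin n} (hab : α < β) (hmw : m < w) (hm1 : m ≠ α) (hm2 : m ≠ β)
    (hw1 : w ≠ α) (hw2 : w ≠ β) {Ugen : Set (GPB Γ)}
    (hXa : xgen Γ α w ∈ Ugen) (hXb : xgen Γ β w ∈ Ugen) (hXm : agen Γ hmw ∈ Ugen) :
    (agen Γ hab * agen Γ hmw * (agen Γ hab)⁻¹ ∈ Subgroup.closure Ugen) ∧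
    ((agen Γ hab)⁻¹ * agen Γ hmw * agen Γ hab ∈ Subgroup.closure Ugen) := by
  have hm' : agen Γ hmw ∈ Subgroup.closure Ugen := subset_closure hXm
  have ha' : xgen Γ α w ∈ Subgroup.closure Ugen := subset_closure hXa
  have hb' : xgen Γ β w ∈ Subgroup.closure Ugen := subset_closure hXb
  rcases lt_trichotomy w α with hA | hE | hB
  · -- m < w < α < β : unlinked
    have hcomm := comm_rel1 Γ hab hmw (Or.inl hA)
    exact ⟨by rw [central_conj hcomm]; exact hm', by rw [central_conj' hcomm]; exact hm'⟩
  · exact absurd hE hw1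
  · rcases lt_trichotomy m α with hC | hE | hD
    · -- m < α < w
      rcases lt_trichotomy w β with hF | hE | hG
      · -- pattern (II) : m < α < w < β
        rw [xgen_of_lt Γ hB, xgen_of_gt Γ hF] at *
        have R2 := comm_rel2 Γ hC hB hF
        have h1t := comm_rel3a Γ hB hF
        have h2t := comm_rel3b Γ hB hF
        have e1 := tri10 h1t h2t
        have e1' := tri12 h1t h2t
        have e2 := central_conj R2
        have e2' := central_conj' R2
        constructor
        · have eqn : agen Γ hab * agen Γ hmw * (agen Γ hab)⁻¹
              = ((agen Γ hB)⁻¹ * agen Γ hF * agen Γ hB)⁻¹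
                * (agen Γ hF * agen Γ hmw * (agen Γ hF)⁻¹)
                * ((agen Γ hB)⁻¹ * agen Γ hF * agen Γ hB) := by
            calc agen Γ hab * agen Γ hmw * (agen Γ hab)⁻¹
                = (agen Γ hab * agen Γ hF * (agen Γ hab)⁻¹)⁻¹
                  * (agen Γ hab * (agen Γ hF * agen Γ hmw * (agen Γ hF)⁻¹) * (agen Γ hab)⁻¹)
                  * (agen Γ hab * agen Γ hF * (agen Γ hab)⁻¹) := by group
              _ = _ := by rw [e1, e2]
          rw [eqn]
          exact mul_mem (mul_mem (inv_mem (mul_mem (mul_mem (inv_mem ha') hb') ha'))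
            (mul_mem (mul_mem hb' hm') (inv_mem hb')))
            (mul_mem (mul_mem (inv_mem ha') hb') ha')
        · have eqn : (agen Γ hab)⁻¹ * agen Γ hmw * agen Γ hab
              = (agen Γ hF * (agen Γ hB * agen Γ hF * (agen Γ hB)⁻¹) * (agen Γ hF)⁻¹)⁻¹
                * (agen Γ hF * agen Γ hmw * (agen Γ hF)⁻¹)
                * (agen Γ hF * (agen Γ hB * agen Γ hF * (agen Γ hB)⁻¹) * (agen Γ hF)⁻¹) := by
            calc (agen Γ hab)⁻¹ * agen Γ hmw * agen Γ hab
                = ((agen Γ hab)⁻¹ * agen Γ hF * agen Γ hab)⁻¹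
                  * ((agen Γ hab)⁻¹ * (agen Γ hF * agen Γ hmw * (agen Γ hF)⁻¹) * agen Γ hab)
                  * ((agen Γ hab)⁻¹ * agen Γ hF * agen Γ hab) := by group
              _ = _ := by rw [e1', e2']
          rw [eqn]
          have hmem : agen Γ hF * (agen Γ hB * agen Γ hF * (agen Γ hB)⁻¹) * (agen Γ hF)⁻¹
              ∈ Subgroup.closure Ugen :=
            mul_mem (mul_mem hb' (mul_mem (mul_mem ha' hb') (inv_mem ha'))) (inv_mem hb')
          exact mul_mem (mul_mem (inv_mem hmem)
            (mul_mem (mul_mem hb' hm') (inv_mem hb'))) hmem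
      · exact absurd hE hw2
      · -- m < α < β < w : unlinked (nested)
        have hcomm := (comm_rel1 Γ hmw hab (Or.inr ⟨hC, hG⟩)).symm
        exact ⟨by rw [central_conj hcomm]; exact hm', by rw [central_conj' hcomm]; exact hm'⟩
    · exact absurd hE.symm hm1.symm
    · rcases lt_trichotomy m β with hF | hE | hG
      · rcases lt_trichotomy w β with hH | hE | hI
        · -- α < m < w < β : nested inside : unlinked
          have hcomm := comm_rel1 Γ hab hmw (Or.inr ⟨hD, hH⟩)
          exact ⟨by rw [central_conj hcomm]; exact hm', by rw [central_conj' hcomm]; exact hm'⟩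
        · exact absurd hE hw2
        · -- pattern (I) : α < m < β < w
          rw [xgen_of_lt Γ (hD.trans hF |>.trans hI) , xgen_of_lt Γ hI] at *
          have R2 := comm_rel2 Γ hD hF hI
          have ht := (commute_conj_down R2).symm
          have h1t := comm_rel3a Γ hab hI
          have h2t := comm_rel3b Γ hab hI
          have e1 := tri6 h1t h2t
          have e1' := tri8 h1t h2t
          have e2 := central_conj ht
          have e2' := central_conj' ht
          constructor
          · have eqn : agen Γ hab * agen Γ hmw * (agen Γ hab)⁻¹
                = ((agen Γ (hab.trans hI) * agen Γ hI)⁻¹ * agen Γ hI * (agen Γ (hab.trans hI) * agen Γ hI))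
                  * ((agen Γ hI)⁻¹ * agen Γ hmw * agen Γ hI)
                  * ((agen Γ (hab.trans hI) * agen Γ hI)⁻¹ * agen Γ hI * (agen Γ (hab.trans hI) * agen Γ hI))⁻¹ := by
              calc agen Γ hab * agen Γ hmw * (agen Γ hab)⁻¹
                  = (agen Γ hab * agen Γ hI * (agen Γ hab)⁻¹)
                    * (agen Γ hab * ((agen Γ hI)⁻¹ * agen Γ hmw * agen Γ hI) * (agen Γ hab)⁻¹)
                    * (agen Γ hab * agen Γ hI * (agen Γ hab)⁻¹)⁻¹ := by group
                _ = _ := by rw [e1, e2]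
            rw [eqn]
            have hmem : (agen Γ (hab.trans hI) * agen Γ hI)⁻¹ * agen Γ hI
                * (agen Γ (hab.trans hI) * agen Γ hI) ∈ Subgroup.closure Ugen :=
              mul_mem (mul_mem (inv_mem (mul_mem ha' hb')) hb') (mul_mem ha' hb')
            exact mul_mem (mul_mem hmem
              (mul_mem (mul_mem (inv_mem hb') hm') hb')) (inv_mem hmem)
          · have eqn : (agen Γ hab)⁻¹ * agen Γ hmw * agen Γ hab
                = ((agen Γ (hab.trans hI) * agen Γ hI) * agen Γ hI * (agen Γ (hab.trans hI) * agen Γ hI)⁻¹)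
                  * ((agen Γ hI)⁻¹ * agen Γ hmw * agen Γ hI)
                  * ((agen Γ (hab.trans hI) * agen Γ hI) * agen Γ hI * (agen Γ (hab.trans hI) * agen Γ hI)⁻¹)⁻¹ := by
              calc (agen Γ hab)⁻¹ * agen Γ hmw * agen Γ hab
                  = ((agen Γ hab)⁻¹ * agen Γ hI * agen Γ hab)
                    * ((agen Γ hab)⁻¹ * ((agen Γ hI)⁻¹ * agen Γ hmw * agen Γ hI) * agen Γ hab)
                    * ((agen Γ hab)⁻¹ * agen Γ hI * agen Γ hab)⁻¹ := by group
                _ = _ := by rw [e1', e2']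
            rw [eqn]
            have hmem : (agen Γ (hab.trans hI) * agen Γ hI) * agen Γ hI
                * (agen Γ (hab.trans hI) * agen Γ hI)⁻¹ ∈ Subgroup.closure Ugen :=
              mul_mem (mul_mem (mul_mem ha' hb') hb') (inv_mem (mul_mem ha' hb'))
            exact mul_mem (mul_mem hmem
              (mul_mem (mul_mem (inv_mem hb') hm') hb')) (inv_mem hmem)
      · exact absurd hE.symm hm2.symm
      · -- β < m < w : unlinked, both right
        have hcomm := (comm_rel1 Γ hmw hab (Or.inl hG)).symm
        exact ⟨by rw [central_conj hcomm]; exact hm', by rw [central_conj' hcomm]; exact hm'⟩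

end Stab

section Engine
open Subgroup
variable {n : ℕ} (Γ : SimpleGraph (Fin n))

lemma engine {α β δ w : Fin n} (hab : α < β) (had : α ≠ δ) (hbd : β ≠ δ)
    (hdw : ¬ Γ.Adj δ w) (hwa : w ≠ α) (hwb : w ≠ β) (hwd : w ≠ δ)
    {r s : Fin n} (hrs : r < s)
    (hcase : (r = w ∧ (s = α ∨ s = β)) ∨ (s = w ∧ (r = α ∨ r = β)) ∨
             (s = w ∧ r ≠ α ∧ r ≠ β ∧ r ≠ δ))
    (S : Set (GPB Γ))
    (hS : ∀ g ∈ S, ∃ (i j : Fin n) (hij : i < j),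
          (i = α ∨ i = β ∨ i = δ) ∧ (j = α ∨ j = β ∨ j = δ) ∧ g = agen Γ hij) :
    ∀ x ∈ Subgroup.closure S, ∀ y ∈ Subgroup.closure S, Commute (agen Γ hrs) ⁅x,y⁆ := by
  set Ugen : Set (GPB Γ) := {xgen Γ α w, xgen Γ β w, agen Γ hrs} with hUdef
  have hXaU : xgen Γ α w ∈ Ugen := by left; rfl
  have hXbU : xgen Γ β w ∈ Ugen := by right; left; rfl
  have hXrU : agen Γ hrs ∈ Ugen := by right; right; rfl
  -- conversion : agen hrs as an xgen
  apply AL Ugen S (agen Γ hab) (agen Γ hrs) (subset_closure hXrU)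
  · -- hstab
    intro u hu
    rcases hu with h | h | h
    · rw [h]; exact (triStab Γ hab hwa hwb hXaU hXbU).1
    · rw [h]; exact (triStab Γ hab hwa hwb hXaU hXbU).2.1
    · rw [h]
      rcases hcase with ⟨hrw, hs⟩ | ⟨hsw, hr⟩ | ⟨hsw, h1, h2, h3⟩
      · subst hrw
        rw [← xgen_of_gt Γ hrs]
        rcases hs with rfl | rfl
        · exact (triStab Γ hab hwa hwb hXaU hXbU).1
        · exact (triStab Γ hab hwa hwb hXaU hXbU).2.1
      · subst hsw
        rw [← xgen_of_lt Γ hrs]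
        rcases hr with rfl | rfl
        · exact (triStab Γ hab hwa hwb hXaU hXbU).1
        · exact (triStab Γ hab hwa hwb hXaU hXbU).2.1
      · subst hsw
        exact (crossStab Γ hab hrs h1 h2 hwa hwb hXaU hXbU hXrU).1
  · -- hstab'
    intro u hu
    rcases hu with h | h | h
    · rw [h]; exact (triStab Γ hab hwa hwb hXaU hXbU).2.2.1
    · rw [h]; exact (triStab Γ hab hwa hwb hXaU hXbU).2.2.2
    · rw [h]
      rcases hcase with ⟨hrw, hs⟩ | ⟨hsw, hr⟩ | ⟨hsw, h1, h2, h3⟩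
      · subst hrw
        rw [← xgen_of_gt Γ hrs]
        rcases hs with rfl | rfl
        · exact (triStab Γ hab hwa hwb hXaU hXbU).2.2.1
        · exact (triStab Γ hab hwa hwb hXaU hXbU).2.2.2
      · subst hsw
        rw [← xgen_of_lt Γ hrs]
        rcases hr with rfl | rfl
        · exact (triStab Γ hab hwa hwb hXaU hXbU).2.2.1
        · exact (triStab Γ hab hwa hwb hXaU hXbU).2.2.2
      · subst hsw
        exact (crossStab Γ hab hrs h1 h2 hwa hwb hXaU hXbU hXrU).2
  · -- hgen
    intro g hg
    obtain ⟨i, j, hij, hi, hj, rfl⟩ := hS g hg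
    have conv : ∀ (cA : Commute (agen Γ hij) (xgen Γ α w))
        (cB : Commute (agen Γ hij) (xgen Γ β w))
        (cR : Commute (agen Γ hij) (agen Γ hrs)),
        ∀ u ∈ Ugen, Commute (agen Γ hij) u := by
      intro cA cB cR u hu
      rcases hu with h | h | h
      · rw [h]; exact cA
      · rw [h]; exact cB
      · rw [h]; exact cR
    rcases hi with rfl | rfl | rfl <;> rcases hj with rfl | rfl | rfl
    · exact absurd hij (lt_irrefl _)
    · exact Or.inl rfl
    · -- pair (α, δ)
      refine Or.inr ?_
      have cA := (commShare Γ hij hwa hwd (Or.inr hdw)).1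
      have cB := commAux Γ hij hab.ne' hbd (fun h => hwb h.symm) hwa hwd (Or.inr hdw)
      refine conv cA cB ?_
      rcases hcase with ⟨hrw, hs⟩ | ⟨hsw, hr⟩ | ⟨hsw, h1, h2, h3⟩
      · subst hrw
        rw [← xgen_of_gt Γ hrs]
        rcases hs with rfl | rfl
        · exact cA
        · exact cB
      · subst hsw
        rw [← xgen_of_lt Γ hrs]
        rcases hr with rfl | rfl
        · exact cA
        · exact cB
      · subst hsw
        rw [← xgen_of_lt Γ hrs]
        exact commAux Γ hij h1 h3 hrs.ne hwa hwd (Or.inr hdw)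
    · exact absurd hij hab.asymm
    · exact absurd hij (lt_irrefl _)
    · -- pair (β, δ)
      refine Or.inr ?_
      have cB := (commShare Γ hij hwb hwd (Or.inr hdw)).1
      have cA := commAux Γ hij hab.ne had (fun h => hwa h.symm) hwb hwd (Or.inr hdw)
      refine conv cA cB ?_
      rcases hcase with ⟨hrw, hs⟩ | ⟨hsw, hr⟩ | ⟨hsw, h1, h2, h3⟩
      · subst hrw
        rw [← xgen_of_gt Γ hrs]
        rcases hs with rfl | rfl
        · exact cA
        · exact cB
      · subst hsw
        rw [← xgen_of_lt Γ hrs]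
        rcases hr with rfl | rfl
        · exact cA
        · exact cB
      · subst hsw
        rw [← xgen_of_lt Γ hrs]
        exact commAux Γ hij h2 h3 hrs.ne hwb hwd (Or.inr hdw)
    · -- pair (δ, α)
      refine Or.inr ?_
      have cA := (commShare Γ hij hwd hwa (Or.inl hdw)).2
      have cB := commAux Γ hij (fun h => hbd (h.symm ▸ rfl)) hab.ne' (fun h => hwb h.symm)
        hwd hwa (Or.inl hdw)
      refine conv cA cB ?_
      rcases hcase with ⟨hrw, hs⟩ | ⟨hsw, hr⟩ | ⟨hsw, h1, h2, h3⟩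
      · subst hrw
        rw [← xgen_of_gt Γ hrs]
        rcases hs with rfl | rfl
        · exact cA
        · exact cB
      · subst hsw
        rw [← xgen_of_lt Γ hrs]
        rcases hr with rfl | rfl
        · exact cA
        · exact cB
      · subst hsw
        rw [← xgen_of_lt Γ hrs]
        exact commAux Γ hij h3 h1 hrs.ne hwd hwa (Or.inl hdw)
    · -- pair (δ, β)
      refine Or.inr ?_
      have cB := (commShare Γ hij hwd hwb (Or.inl hdw)).2
      have cA := commAux Γ hij (fun h => had (h.symm ▸ rfl)) hab.ne (fun h => hwa h.symm)
        hwd hwb (Or.inl hdw)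
      refine conv cA cB ?_
      rcases hcase with ⟨hrw, hs⟩ | ⟨hsw, hr⟩ | ⟨hsw, h1, h2, h3⟩
      · subst hrw
        rw [← xgen_of_gt Γ hrs]
        rcases hs with rfl | rfl
        · exact cA
        · exact cB
      · subst hsw
        rw [← xgen_of_lt Γ hrs]
        rcases hr with rfl | rfl
        · exact cA
        · exact cB
      · subst hsw
        rw [← xgen_of_lt Γ hrs]
        exact commAux Γ hij h3 h2 hrs.ne hwd hwb (Or.inl hdw)
    · exact absurd hij (lt_irrefl _)

end Engine
section Main
open Subgroup
variable {n : ℕ} (Γ : SimpleGraph (Fin n))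

lemma k4_helper (hK4 : Γ.CliqueFree 4) {a b c d : Fin n}
    (nab : a ≠ b) (nac : a ≠ c) (nad : a ≠ d) (nbc : b ≠ c) (nbd : b ≠ d) (ncd : c ≠ d)
    (eab : Γ.Adj a b) (eac : Γ.Adj a c) (ead : Γ.Adj a d)
    (ebc : Γ.Adj b c) (ebd : Γ.Adj b d) (ecd : Γ.Adj c d) : False := by
  apply hK4 ({a, b, c, d} : Finset (Fin n))
  constructor
  · intro x hx y hy hxy
    simp only [Finset.coe_insert, Set.mem_insert_iff, Finset.coe_singleton,
      Set.mem_singleton_iff] at hx hy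
    rcases hx with rfl | rfl | rfl | rfl <;> rcases hy with rfl | rfl | rfl | rfl <;>
      first
        | exact absurd rfl hxy
        | assumption
        | exact Γ.adj_symm eab | exact Γ.adj_symm eac | exact Γ.adj_symm ead
        | exact Γ.adj_symm ebc | exact Γ.adj_symm ebd | exact Γ.adj_symm ecd
  · rw [Finset.card_insert_of_notMem (by simp [nab, nac, nad]),
      Finset.card_insert_of_notMem (by simp [nbc, nbd]),
      Finset.card_insert_of_notMem (by simp [ncd]), Finset.card_singleton]

end Main

set_option maxHeartbeats 2000000 in
/-- For a `K₄`-free graph `Γ`, a maximal clique `X`, and an edge `{r,s}` of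
`Γ` not contained in `X`, the generator `a_{rs}` commutes with the commutator subgroup
`[P_X, P_X]` in `P_Γ`. -/
theorem maximal_clique_commutator_commute {n : ℕ} (Γ : SimpleGraph (Fin n))
    (hK4 : Γ.CliqueFree 4) (X : Set (Fin n)) (hX : MaxClique Γ X)
    {r s : Fin n} (hrs : r < s) (ers : Γ.Adj r s) (hout : ¬ (r ∈ X ∧ s ∈ X)) :
    ∀ x ∈ ⁅cliqueSubgroup Γ X, cliqueSubgroup Γ X⁆, Commute (agen Γ hrs) x := by
  classical
  have hclique := hX.1
  set SS : Set (GPB Γ) :=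
    {g : GPB Γ | ∃ p : PBIdx n, (p.1.1 ∈ X ∧ p.1.2 ∈ X) ∧ g = PresentedGroup.of p} with hSSdef
  have main : ∀ x ∈ Subgroup.closure SS, ∀ y ∈ Subgroup.closure SS,
      Commute (agen Γ hrs) ⁅x, y⁆ := by
    by_cases hbig : ∃ u v z : Fin n, u ∈ X ∧ v ∈ X ∧ z ∈ X ∧ u < v ∧ v < z
    · obtain ⟨p, q, t3, hpX, hqX, htX, hpq, hqt⟩ := hbig
      have hpt : p < t3 := hpq.trans hqt
      have hXsub : ∀ z ∈ X, z = p ∨ z = q ∨ z = t3 := by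
        intro z hz
        by_contra hcon
        push_neg at hcon
        obtain ⟨h1, h2, h3⟩ := hcon
        exact k4_helper Γ hK4 h1 h2 h3 hpq.ne hpt.ne hqt.ne
          (hclique hz hpX h1) (hclique hz hqX h2) (hclique hz htX h3)
          (hclique hpX hqX hpq.ne) (hclique hpX htX hpt.ne) (hclique hqX htX hqt.ne)
      have hw_find : ∀ w : Fin n, w ∉ X → ∃ d, (d = p ∨ d = q ∨ d = t3) ∧ ¬ Γ.Adj d w := by
        intro w hw
        by_contra hcon
        push_neg at hcon
        have hwp : p ≠ w := fun h => hw (h ▸ hpX)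
        have hwq : q ≠ w := fun h => hw (h ▸ hqX)
        have hwt : t3 ≠ w := fun h => hw (h ▸ htX)
        exact k4_helper Γ hK4 hpq.ne hpt.ne hwp hqt.ne hwq hwt
          (hclique hpX hqX hpq.ne) (hclique hpX htX hpt.ne) (hcon p (Or.inl rfl))
          (hclique hqX htX hqt.ne) (hcon q (Or.inr (Or.inl rfl))) (hcon t3 (Or.inr (Or.inr rfl)))
      have hSmap : ∀ g ∈ SS, ∃ (i j : Fin n) (hij : i < j),
          (i = p ∨ i = q ∨ i = t3) ∧ (j = p ∨ j = q ∨ j = t3) ∧ g = agen Γ hij := by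
        rintro g ⟨⟨⟨i, j⟩, hij⟩, ⟨hiX, hjX⟩, rfl⟩
        exact ⟨i, j, hij, hXsub i hiX, hXsub j hjX, rfl⟩
      -- helper applying the engine given the data of δ and the case info
      have run : ∀ (w : Fin n), w ∉ X →
          ((r = w ∧ (s = p ∨ s = q ∨ s = t3) ∧ s ∈ X) ∨
           (s = w ∧ (r = p ∨ r = q ∨ r = t3) ∧ r ∈ X) ∨
           (s = w ∧ r ∉ X)) →
          ∀ x ∈ Subgroup.closure SS, ∀ y ∈ Subgroup.closure SS,
            Commute (agen Γ hrs) ⁅x, y⁆ := by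
        intro w hwX hcase0
        obtain ⟨d, hd3, hdnadj⟩ := hw_find w hwX
        have hdX : d ∈ X := by rcases hd3 with rfl | rfl | rfl <;> assumption
        have hwp' : w ≠ p := fun h => hwX (h ▸ hpX)
        have hwq' : w ≠ q := fun h => hwX (h ▸ hqX)
        have hwt' : w ≠ t3 := fun h => hwX (h ▸ htX)
        -- the endpoint in X (if any) is adjacent to w hence different from d
        have hv_ne_d : ∀ v : Fin n, Γ.Adj v w → v ≠ d := by
          intro v hadj h
          exact hdnadj (h ▸ hadj)
        rcases hd3 with rfl | rfl | rfl
        · -- δ = p, α = q, β = t3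
          refine engine Γ hqt hpq.ne' hpt.ne' hdnadj hwq' hwt' hwp' hrs ?_ SS ?_
          · rcases hcase0 with ⟨hrw, hs3, hsX⟩ | ⟨hsw, hr3, hrX⟩ | ⟨hsw, hrX⟩
            · left
              refine ⟨hrw, ?_⟩
              have : s ≠ d := hv_ne_d s (Γ.adj_symm (hrw ▸ ers))
              tauto
            · right; left
              refine ⟨hsw, ?_⟩
              have : r ≠ d := hv_ne_d r (hsw ▸ ers)
              tauto
            · right; right
              exact ⟨hsw, fun h => hrX (h ▸ hqX), fun h => hrX (h ▸ htX), fun h => hrX (h ▸ hpX)⟩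
          · intro g hg
            obtain ⟨i, j, hij, hi, hj, hgeq⟩ := hSmap g hg
            exact ⟨i, j, hij, by tauto, by tauto, hgeq⟩
        · -- δ = q, α = p, β = t3
          refine engine Γ hpt hpq.ne hqt.ne' hdnadj hwp' hwt' hwq' hrs ?_ SS ?_
          · rcases hcase0 with ⟨hrw, hs3, hsX⟩ | ⟨hsw, hr3, hrX⟩ | ⟨hsw, hrX⟩
            · left
              refine ⟨hrw, ?_⟩
              have : s ≠ d := hv_ne_d s (Γ.adj_symm (hrw ▸ ers))
              tauto
            · right; left
              refine ⟨hsw, ?_⟩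
              have : r ≠ d := hv_ne_d r (hsw ▸ ers)
              tauto
            · right; right
              exact ⟨hsw, fun h => hrX (h ▸ hpX), fun h => hrX (h ▸ htX), fun h => hrX (h ▸ hqX)⟩
          · intro g hg
            obtain ⟨i, j, hij, hi, hj, hgeq⟩ := hSmap g hg
            exact ⟨i, j, hij, by tauto, by tauto, hgeq⟩
        · -- δ = t3, α = p, β = q
          refine engine Γ hpq hpt.ne hqt.ne hdnadj hwp' hwq' hwt' hrs ?_ SS ?_
          · rcases hcase0 with ⟨hrw, hs3, hsX⟩ | ⟨hsw, hr3, hrX⟩ | ⟨hsw, hrX⟩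
            · left
              refine ⟨hrw, ?_⟩
              have : s ≠ d := hv_ne_d s (Γ.adj_symm (hrw ▸ ers))
              tauto
            · right; left
              refine ⟨hsw, ?_⟩
              have : r ≠ d := hv_ne_d r (hsw ▸ ers)
              tauto
            · right; right
              exact ⟨hsw, fun h => hrX (h ▸ hpX), fun h => hrX (h ▸ hqX), fun h => hrX (h ▸ htX)⟩
          · intro g hg
            obtain ⟨i, j, hij, hi, hj, hgeq⟩ := hSmap g hg
            exact ⟨i, j, hij, by tauto, by tauto, hgeq⟩
      by_cases hrX : r ∈ X
      · have hsX : s ∉ X := fun h => hout ⟨hrX, h⟩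
        exact run s hsX (Or.inr (Or.inl ⟨rfl, hXsub r hrX, hrX⟩))
      · by_cases hsX : s ∈ X
        · exact run r hrX (Or.inl ⟨rfl, hXsub s hsX, hsX⟩)
        · exact run s hsX (Or.inr (Or.inr ⟨rfl, hrX⟩))
    · -- X has at most two elements: the clique subgroup is abelian
      have h3 : ∀ u v z : Fin n, u ∈ X → v ∈ X → z ∈ X → u ≠ v → v ≠ z → u ≠ z → False := by
        intro u v z hu hv hz huv hvz huz
        apply hbig
        rcases lt_trichotomy u v with h1 | h1 | h1
        · rcases lt_trichotomy v z with h2 | h2 | h2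
          · exact ⟨u, v, z, hu, hv, hz, h1, h2⟩
          · exact absurd h2 hvz
          · rcases lt_trichotomy u z with h4 | h4 | h4
            · exact ⟨u, z, v, hu, hz, hv, h4, h2⟩
            · exact absurd h4 huz
            · exact ⟨z, u, v, hz, hu, hv, h4, h1⟩
        · exact absurd h1 huv
        · rcases lt_trichotomy v z with h2 | h2 | h2
          · rcases lt_trichotomy u z with h4 | h4 | h4
            · exact ⟨v, u, z, hv, hu, hz, h1, h4⟩
            · exact absurd h4 huz
            · exact ⟨v, z, u, hv, hz, hu, h2, h4⟩
          · exact absurd h2 hvz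
          · exact ⟨z, v, u, hz, hv, hu, h2, h1⟩
      have hSeq : ∀ g1 ∈ SS, ∀ g2 ∈ SS, g1 = g2 := by
        rintro g1 ⟨⟨⟨i1, j1⟩, hij1⟩, ⟨hi1, hj1⟩, rfl⟩ g2 ⟨⟨⟨i2, j2⟩, hij2⟩, ⟨hi2, hj2⟩, rfl⟩
        have hii : i2 = i1 ∨ i2 = j1 := by
          by_contra hc
          push_neg at hc
          exact h3 i1 j1 i2 hi1 hj1 hi2 hij1.ne (fun h => hc.2 h.symm) (fun h => hc.1 h.symm)
        have hjj : j2 = i1 ∨ j2 = j1 := by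
          by_contra hc
          push_neg at hc
          exact h3 i1 j1 j2 hi1 hj1 hj2 hij1.ne (fun h => hc.2 h.symm) (fun h => hc.1 h.symm)
        rcases hii with rfl | rfl
        · rcases hjj with h | rfl
          · exact absurd (h ▸ hij2) (lt_irrefl _)
          · rfl
        · rcases hjj with rfl | h
          · exact absurd (hij1.trans hij2) (lt_irrefl _)
          · exact absurd (h ▸ hij2) (lt_irrefl _)
      intro x hx y hy
      have hcomm : Commute x y := by
        induction hx using Subgroup.closure_induction with
        | mem g hg =>
            induction hy using Subgroup.closure_induction with
            | mem g2 hg2 => rw [hSeq g hg g2 hg2]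
            | one => exact Commute.one_right g
            | mul a b _ _ ha hb => exact ha.mul_right hb
            | inv a _ ha => exact ha.inv_right
        | one => exact Commute.one_left y
        | mul a b _ _ ha hb => exact ha.mul_left hb
        | inv a _ ha => exact ha.inv_left
      have h1 : ⁅x, y⁆ = 1 := commutatorElement_eq_one_iff_commute.mpr hcomm
      rw [h1]
      exact Commute.one_right _
  intro x hx
  have hle : ⁅cliqueSubgroup Γ X, cliqueSubgroup Γ X⁆
      ≤ Subgroup.centralizer {agen Γ hrs} := by
    rw [Subgroup.commutator_le]
    intro g1 h1 g2 h2
    rw [Subgroup.mem_centralizer_singleton_iff]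
    exact (main g1 h1 g2 h2).eq.symm
  have h2 := hle hx
  rw [Subgroup.mem_centralizer_singleton_iff] at h2
  exact h2.symm

end GraphicBraid
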